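/- Fix b ∈ ℝ and Δt > 0 with bΔt ∉ πℤ, let n ∈ ℤ satisfy |bΔt − 2πn| < π, and let I be the open interval with endpoints 2πn and bΔt. Then the derivative of w(ν) = (ν − bΔt)(cos ν − 1)/sin ν equals (bΔt − ν − sin ν)/(1 + cos ν) on I, and there is a unique ν* ∈ I with sin(ν*) = bΔt − ν*; w is increasing on the part of I below ν* and decreasing above ν*, so w attains its unique maximum w_max = 1 − cos(ν*) at ν*. -/

import Mathlib

open Real Set

theorem stmt_12 (b Δt : ℝ) (hΔt : 0 < Δt)
    (hbt : ¬∃ k : ℤ, b * Δt = k * Real.pi)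
    (n : ℤ) (hn : |b * Δt - 2 * Real.pi * n| < Real.pi)
    (w : ℝ → ℝ)
    (hw : ∀ ν, w ν = (ν - b * Δt) * (Real.cos ν - 1) / Real.sin ν)
    (lo hi : ℝ) (hlo : lo = min (2 * Real.pi * n) (b * Δt))
    (hhi : hi = max (2 * Real.pi * n) (b * Δt)) :
    (∀ ν ∈ Set.Ioo lo hi,
        deriv w ν = (b * Δt - ν - Real.sin ν) / (1 + Real.cos ν)) ∧
    ∃ ν' ∈ Set.Ioo lo hi,
      Real.sin ν' = b * Δt - ν' ∧
      (∀ ν'' ∈ Set.Ioo lo hi, Real.sin ν'' = b * Δt - ν'' → ν'' = ν') ∧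
      StrictMonoOn w (Set.Ioo lo hi ∩ Set.Iic ν') ∧
      StrictAntiOn w (Set.Ioo lo hi ∩ Set.Ici ν') ∧
      w ν' = 1 - Real.cos ν' ∧
      (∀ ν ∈ Set.Ioo lo hi, w ν ≤ 1 - Real.cos ν') := by
  have hπ := Real.pi_pos
  set c := b * Δt with hc
  set a := 2 * Real.pi * n with ha
  have hsina : Real.sin a = 0 := by
    have h2 : a = ((2*n : ℤ) : ℝ) * Real.pi := by push_cast; rw [ha]; ring
    rw [h2, Real.sin_int_mul_pi]
  have hca : c ≠ a := by
    intro h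
    exact hbt ⟨2*n, by push_cast; rw [h, ha]; ring⟩
  -- shift identities
  have hshift_sin : ∀ ν : ℝ, Real.sin ν = Real.sin (ν - a) := by
    intro ν
    conv_lhs => rw [show ν = (ν - a) + n * (2*Real.pi) by rw [ha]; ring]
    rw [Real.sin_add_int_mul_two_pi]
  have hshift_cos : ∀ ν : ℝ, Real.cos ν = Real.cos (ν - a) := by
    intro ν
    conv_lhs => rw [show ν = (ν - a) + n * (2*Real.pi) by rw [ha]; ring]
    rw [Real.cos_add_int_mul_two_pi]
  -- basic window facts
  have hmem : ∀ ν ∈ Set.Ioo lo hi, ν - a ≠ 0 ∧ |ν - a| < Real.pi := by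
    intro ν hν
    rcases lt_or_gt_of_ne hca.symm with hlt | hgt
    · have hlo' : lo = a := by rw [hlo, min_eq_left hlt.le]
      have hhi' : hi = c := by rw [hhi, max_eq_right hlt.le]
      rw [hlo'] at hν; rw [hhi'] at hν
      have h1 : c - a < Real.pi := by have := abs_lt.mp hn; linarith [this.2]
      constructor
      · have := hν.1; intro h; linarith [sub_eq_zero.mp h ▸ this]
      · rw [abs_lt]; constructor <;> [linarith [hν.1]; linarith [hν.2]]
    · have hlo' : lo = c := by rw [hlo, min_eq_right hgt.le]
      have hhi' : hi = a := by rw [hhi, max_eq_left hgt.le]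
      rw [hlo'] at hν; rw [hhi'] at hν
      have h1 : a - c < Real.pi := by have := abs_lt.mp hn; linarith [this.1]
      constructor
      · have := hν.2; intro h; linarith [sub_eq_zero.mp h ▸ this]
      · rw [abs_lt]; constructor <;> [linarith [hν.1]; linarith [hν.2]]
  have sin_ne : ∀ ν ∈ Set.Ioo lo hi, Real.sin ν ≠ 0 := by
    intro ν hν
    obtain ⟨h0, hlt⟩ := hmem ν hν
    rw [hshift_sin ν]
    rcases h0.lt_or_gt with h | h
    · have : Real.sin (-(ν - a)) > 0 := Real.sin_pos_of_pos_of_lt_pi (by linarith) (by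
        have := abs_lt.mp hlt; linarith [this.1])
      rw [Real.sin_neg] at this; linarith
    · have : Real.sin (ν - a) > 0 := Real.sin_pos_of_pos_of_lt_pi h (by
        have := abs_lt.mp hlt; linarith [this.2])
      linarith
  have cos_pos : ∀ ν ∈ Set.Ioo lo hi, 0 < 1 + Real.cos ν := by
    intro ν hν
    obtain ⟨h0, hlt⟩ := hmem ν hν
    have habs := abs_lt.mp hlt
    rw [hshift_cos ν]
    have hhalf : Real.cos ((ν - a)/2) > 0 := by
      apply Real.cos_pos_of_mem_Ioo
      constructor <;> linarith [habs.1, habs.2]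
    have : Real.cos (ν - a) = 2 * Real.cos ((ν - a)/2)^2 - 1 := by
      have h2 := Real.cos_two_mul ((ν - a)/2)
      rw [show 2 * ((ν - a)/2) = ν - a by ring] at h2
      exact h2
    nlinarith
  have hlohi : lo < hi := by
    rw [hlo, hhi]; exact min_lt_max.mpr (Ne.symm hca)
  -- the function f
  set f : ℝ → ℝ := fun ν => c - ν - Real.sin ν with hf
  have hfd : ∀ ν : ℝ, HasDerivAt f (-1 - Real.cos ν) ν := by
    intro ν
    have h1 : HasDerivAt (fun x : ℝ => c - x) (-1) ν := by
      simpa using (hasDerivAt_id ν).const_sub c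
    exact h1.sub (Real.hasDerivAt_sin ν)
  have hfc : Continuous f := by
    exact (continuous_const.sub continuous_id).sub Real.continuous_sin
  have hanti : StrictAntiOn f (Set.Icc lo hi) := by
    apply strictAntiOn_of_deriv_neg (convex_Icc lo hi) hfc.continuousOn
    intro x hx
    rw [interior_Icc] at hx
    rw [(hfd x).deriv]
    linarith [cos_pos x hx]
  -- endpoint signs
  have hsigns : 0 < f lo ∧ f hi < 0 := by
    rcases lt_or_gt_of_ne hca.symm with hlt | hgt
    · have hlo' : lo = a := by rw [hlo, min_eq_left hlt.le]
      have hhi' : hi = c := by rw [hhi, max_eq_right hlt.le]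
      have hsc : 0 < Real.sin c := by
        rw [hshift_sin c]
        exact Real.sin_pos_of_pos_of_lt_pi (by linarith)
          (by have := abs_lt.mp hn; linarith [this.2])
      constructor
      · rw [hlo']; simp only [hf]; rw [hsina]; linarith
      · rw [hhi']; simp only [hf]; linarith
    · have hlo' : lo = c := by rw [hlo, min_eq_right hgt.le]
      have hhi' : hi = a := by rw [hhi, max_eq_left hgt.le]
      have hsc : Real.sin c < 0 := by
        rw [hshift_sin c]
        have : Real.sin (-(c - a)) > 0 := Real.sin_pos_of_pos_of_lt_pi (by linarith)
          (by have := abs_lt.mp hn; linarith [this.1])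
        rw [Real.sin_neg] at this; linarith
      constructor
      · rw [hlo']; simp only [hf]; linarith
      · rw [hhi']; simp only [hf]; rw [hsina]; linarith
  -- IVT
  obtain ⟨ν', hν'I, hfν'⟩ : ∃ ν' ∈ Set.Ioo lo hi, f ν' = 0 := by
    have h := intermediate_value_Ioo' hlohi.le hfc.continuousOn
      (Set.mem_Ioo.mpr ⟨hsigns.2, hsigns.1⟩)
    obtain ⟨x, hx, hfx⟩ := h
    exact ⟨x, hx, hfx⟩
  have hsin' : Real.sin ν' = c - ν' := by simp only [hf] at hfν'; linarith
  -- derivative of w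
  have hwd : ∀ ν ∈ Set.Ioo lo hi,
      HasDerivAt w ((c - ν - Real.sin ν)/(1 + Real.cos ν)) ν := by
    intro ν hν
    have hs := sin_ne ν hν
    have hc1 : (1 : ℝ) + Real.cos ν ≠ 0 := ne_of_gt (cos_pos ν hν)
    have h1 : HasDerivAt (fun x : ℝ => (x - c) * (Real.cos x - 1))
        (1 * (Real.cos ν - 1) + (ν - c) * (-Real.sin ν)) ν :=
      ((hasDerivAt_id ν).sub_const c).mul ((Real.hasDerivAt_cos ν).sub_const 1)
    have h2 := h1.div (Real.hasDerivAt_sin ν) hs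
    have hwe : w = fun x => (x - c) * (Real.cos x - 1) / Real.sin x := funext hw
    rw [hwe]
    refine h2.congr_deriv (Eq.symm ?_)
    have pyth := Real.sin_sq_add_cos_sq ν
    field_simp
    linear_combination ((ν - c) * Real.cos ν - Real.sin ν) * pyth
  have hderiv : ∀ ν ∈ Set.Ioo lo hi,
      deriv w ν = (c - ν - Real.sin ν) / (1 + Real.cos ν) :=
    fun ν hν => (hwd ν hν).deriv
  -- f signs on the two sides
  have hfpos : ∀ x ∈ Set.Ioo lo hi, x < ν' → 0 < f x := by
    intro x hx hxν
    have := hanti (Set.mem_Icc.mpr ⟨hx.1.le, hx.2.le⟩)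
      (Set.mem_Icc.mpr ⟨hν'I.1.le, hν'I.2.le⟩) hxν
    rw [hfν'] at this; exact this
  have hfneg : ∀ x ∈ Set.Ioo lo hi, ν' < x → f x < 0 := by
    intro x hx hxν
    have := hanti (Set.mem_Icc.mpr ⟨hν'I.1.le, hν'I.2.le⟩)
      (Set.mem_Icc.mpr ⟨hx.1.le, hx.2.le⟩) hxν
    rw [hfν'] at this; exact this
  have hmono : StrictMonoOn w (Set.Ioo lo hi ∩ Set.Iic ν') := by
    apply strictMonoOn_of_deriv_pos ((convex_Ioo lo hi).inter (convex_Iic ν'))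
    · intro x hx
      exact (hwd x hx.1).continuousAt.continuousWithinAt
    · intro x hx
      rw [interior_inter, interior_Iic, (isOpen_Ioo).interior_eq] at hx
      rw [hderiv x hx.1]
      exact div_pos (hfpos x hx.1 hx.2) (cos_pos x hx.1)
  have hantiw : StrictAntiOn w (Set.Ioo lo hi ∩ Set.Ici ν') := by
    apply strictAntiOn_of_deriv_neg ((convex_Ioo lo hi).inter (convex_Ici ν'))
    · intro x hx
      exact (hwd x hx.1).continuousAt.continuousWithinAt
    · intro x hx
      rw [interior_inter, interior_Ici, (isOpen_Ioo).interior_eq] at hx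
      rw [hderiv x hx.1]
      exact div_neg_of_neg_of_pos (hfneg x hx.1 hx.2) (cos_pos x hx.1)
  have hwval : w ν' = 1 - Real.cos ν' := by
    rw [hw]
    have hs := sin_ne ν' hν'I
    have h1 : ν' - c = -Real.sin ν' := by linarith
    rw [h1]
    field_simp
    ring
  refine ⟨hderiv, ν', hν'I, hsin', ?_, hmono, hantiw, hwval, ?_⟩
  · intro ν'' hν'' hsin''
    have hfν'' : f ν'' = 0 := by simp only [hf]; linarith
    exact hanti.injOn (Set.mem_Icc.mpr ⟨hν''.1.le, hν''.2.le⟩)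
      (Set.mem_Icc.mpr ⟨hν'I.1.le, hν'I.2.le⟩) (by rw [hfν'', hfν'])
  · intro ν hν
    rcases le_or_gt ν ν' with h | h
    · rcases eq_or_lt_of_le h with rfl | h
      · exact hwval.le
      · have := hmono ⟨hν, h.le⟩ ⟨hν'I, Set.mem_Iic.mpr le_rfl⟩ h
        linarith [hwval ▸ this]
    · have := hantiw ⟨hν'I, Set.mem_Ici.mpr le_rfl⟩ ⟨hν, h.le⟩ h
      linarith [hwval ▸ this]
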